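/- Let n ≥ 2 and consider the three-dimensional discrete gradient with blocks B_x = (1/(4h))·(G ⊗ H ⊗ H), B_y = (1/(4h))·(H ⊗ G ⊗ H), B_z = (1/(4h))·(H ⊗ H ⊗ G), h = 1/n. The common kernel {p ∈ ℝ^{n³} : B_x p = 0, B_y p = 0, B_z p = 0} has dimension 3n − 1. Consequently the Schur complement Bᵀ A⁻¹ B of the three-dimensional semi-staggered Stokes discretization has exactly 3n − 1 zero eigenvalues. -/

import Mathlib

open Matrix
open scoped Kronecker

def Emat (n : ℕ) : Matrix (Fin (n - 1)) (Fin n) ℝ :=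
  Matrix.of fun i j => if (j : ℕ) = (i : ℕ) + 1 then 1 else 0
def Zmat (n : ℕ) : Matrix (Fin (n - 1)) (Fin n) ℝ :=
  Matrix.of fun i j => if (j : ℕ) = (i : ℕ) then 1 else 0
def Gmat (n : ℕ) : Matrix (Fin (n - 1)) (Fin n) ℝ := Emat n - Zmat n
def Hmat (n : ℕ) : Matrix (Fin (n - 1)) (Fin n) ℝ := Emat n + Zmat n

namespace Stmt18

def nalt (m : ℕ) : ℝ := (-1) ^ m
lemma nalt_succ (m : ℕ) : nalt (m + 1) = -nalt m := by simp [nalt, pow_succ]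
lemma nalt_sq (m : ℕ) : nalt m * nalt m = 1 := by simp [nalt, ← pow_add]
lemma nalt_add (a b : ℕ) : nalt (a + b) = nalt a * nalt b := by simp [nalt, pow_add]
lemma nalt_ne_zero (m : ℕ) : nalt m ≠ 0 := by simp [nalt]
lemma nalt_zero : nalt 0 = 1 := by simp [nalt]
lemma nalt_one : nalt 1 = -1 := by simp [nalt]

lemma kron_mulVec {m₁ m₂ n₁ n₂ : Type*} [Fintype m₁] [Fintype m₂] [Fintype n₁] [Fintype n₂]
    (A : Matrix m₁ n₁ ℝ) (B : Matrix m₂ n₂ ℝ) (x : n₁ × n₂ → ℝ) (q : m₁ × m₂) :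
    (A ⊗ₖ B).mulVec x q = A.mulVec (fun k => B.mulVec (fun l => x (k, l)) q.2) q.1 := by
  simp [Matrix.mulVec, dotProduct, Fintype.sum_prod_type, Finset.mul_sum,
    kroneckerMap_apply, mul_assoc]

lemma kron_mulVec_pure {m₁ m₂ n₁ n₂ : Type*} [Fintype m₁] [Fintype m₂] [Fintype n₁] [Fintype n₂]
    (A : Matrix m₁ n₁ ℝ) (B : Matrix m₂ n₂ ℝ) (x : n₁ × n₂ → ℝ) (u : n₁ → ℝ) (v : n₂ → ℝ)
    (hx : ∀ a b, x (a, b) = u a * v b) (q : m₁ × m₂) :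
    (A ⊗ₖ B).mulVec x q = A.mulVec u q.1 * B.mulVec v q.2 := by
  rw [kron_mulVec]
  have inner : ∀ k, B.mulVec (fun l => x (k, l)) q.2 = u k * B.mulVec v q.2 := by
    intro k
    simp only [hx]
    simp [Matrix.mulVec, dotProduct, Finset.mul_sum, mul_comm, mul_left_comm]
  simp only [inner]
  simp [Matrix.mulVec, dotProduct, Finset.sum_mul, mul_comm, mul_left_comm, mul_assoc]

variable {n : ℕ}

def lo (i : Fin (n - 1)) : Fin n := ⟨i, by have := i.2; omega⟩
def hi (i : Fin (n - 1)) : Fin n := ⟨(i : ℕ) + 1, by have := i.2; omega⟩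

lemma sum_ite_val {c : ℕ} (h : c < n) (x : Fin n → ℝ) :
    ∑ j : Fin n, (if (j : ℕ) = c then 1 else 0) * x j = x ⟨c, h⟩ := by
  rw [Finset.sum_eq_single ⟨c, h⟩]
  · simp
  · intro b _ hb
    have : (b : ℕ) ≠ c := fun hc => hb (Fin.ext hc)
    simp [this]
  · simp

lemma Hmat_mulVec (x : Fin n → ℝ) (i : Fin (n - 1)) :
    (Hmat n).mulVec x i = x (hi i) + x (lo i) := by
  have h1 : (i : ℕ) + 1 < n := by have := i.2; omega
  have h2 : (i : ℕ) < n := by have := i.2; omega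
  simp only [Matrix.mulVec, dotProduct, Hmat, Emat, Zmat, Matrix.add_apply, Matrix.of_apply,
    add_mul]
  rw [Finset.sum_add_distrib, sum_ite_val h1, sum_ite_val h2]
  rfl

lemma Gmat_mulVec (x : Fin n → ℝ) (i : Fin (n - 1)) :
    (Gmat n).mulVec x i = x (hi i) - x (lo i) := by
  have h1 : (i : ℕ) + 1 < n := by have := i.2; omega
  have h2 : (i : ℕ) < n := by have := i.2; omega
  simp only [Matrix.mulVec, dotProduct, Gmat, Emat, Zmat, Matrix.sub_apply, Matrix.of_apply,
    sub_mul]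
  rw [Finset.sum_sub_distrib, sum_ite_val h1, sum_ite_val h2]
  rfl

lemma Hmat_mulVec_nalt : (Hmat n).mulVec (fun j : Fin n => nalt j) = 0 := by
  funext i
  rw [Hmat_mulVec]
  simp [hi, lo, nalt_succ]

lemma Gmat_mulVec_one : (Gmat n).mulVec (fun _ : Fin n => 1) = 0 := by
  funext i
  rw [Gmat_mulVec]
  simp



variable {n : ℕ}

-- vectors
def altF : Fin n → ℝ := fun j => nalt j
def oneF : Fin n → ℝ := fun _ => 1
def eF (i : Fin n) : Fin n → ℝ := fun r => if r = i then 1 else 0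
def eF' (j' : Fin (n - 1)) : Fin n → ℝ := fun r => if (r : ℕ) = (j' : ℕ) + 1 then 1 else 0

def pure3 (u v w : Fin n → ℝ) : (Fin n × Fin n) × Fin n → ℝ :=
  fun r => u r.1.1 * v r.1.2 * w r.2

abbrev ι (n : ℕ) := Fin n ⊕ Fin (n - 1) ⊕ Fin (n - 1) ⊕ Unit

def fam (n : ℕ) : ι n → ((Fin n × Fin n) × Fin n) → ℝ :=
  fun i => match i with
  | Sum.inl i => pure3 (eF i) altF altF
  | Sum.inr (Sum.inl j') => pure3 altF (eF' j') altF
  | Sum.inr (Sum.inr (Sum.inl k')) => pure3 altF altF (eF' k')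
  | Sum.inr (Sum.inr (Sum.inr _)) => pure3 oneF oneF oneF

lemma card_ι (hn : 2 ≤ n) : Fintype.card (ι n) = 3 * n - 1 := by
  have : Fintype.card (ι n) = n + ((n-1) + ((n-1) + 1)) := by
    simp [ι, Fintype.card_sum]
  rw [this]; omega

def shiftF (g : Fin (n - 1) → ℝ) : Fin n → ℝ :=
  fun j => if h : (j : ℕ) = 0 then 0 else
    g ⟨(j : ℕ) - 1, by have := j.2; omega⟩

lemma sum_shift (g : Fin (n - 1) → ℝ) (j : Fin n) :
    ∑ j' : Fin (n - 1), g j' * (if (j : ℕ) = (j' : ℕ) + 1 then 1 else 0) = shiftF g j := by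
  by_cases h : (j : ℕ) = 0
  · rw [shiftF]
    rw [dif_pos h]
    apply Finset.sum_eq_zero
    intro j' _
    have : (j : ℕ) ≠ (j' : ℕ) + 1 := by omega
    simp [this]
  · have hj1 : (j : ℕ) - 1 < n - 1 := by have := j.2; omega
    rw [shiftF, dif_neg h]
    rw [Finset.sum_eq_single (⟨(j : ℕ) - 1, hj1⟩ : Fin (n - 1))]
    · have : (j : ℕ) = ((⟨(j : ℕ) - 1, hj1⟩ : Fin (n - 1)) : ℕ) + 1 := by simp; omega
      rw [if_pos this, mul_one]
    · intro b _ hb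
      have : (j : ℕ) ≠ (b : ℕ) + 1 := by
        intro hc
        apply hb
        apply Fin.ext
        simp
        omega
      simp [this]
    · simp


/-- evaluation of a generic combination of the family -/
lemma comb_eval (gx : Fin n → ℝ) (gy gz : Fin (n - 1) → ℝ) (gd : ℝ)
    (r : (Fin n × Fin n) × Fin n) :
    (∑ i, gx i • fam n (Sum.inl i)
      + (∑ j', gy j' • fam n (Sum.inr (Sum.inl j'))
      + (∑ k', gz k' • fam n (Sum.inr (Sum.inr (Sum.inl k')))
      + gd • fam n (Sum.inr (Sum.inr (Sum.inr ())))))) r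
    = gx r.1.1 * (nalt r.1.2 * nalt r.2)
      + nalt r.1.1 * (shiftF gy r.1.2 * nalt r.2)
      + nalt r.1.1 * (nalt r.1.2 * shiftF gz r.2) + gd := by
  have e1 : (∑ i, gx i • fam n (Sum.inl i)) r = gx r.1.1 * (nalt r.1.2 * nalt r.2) := by
    rw [Finset.sum_apply]
    simp only [Pi.smul_apply, fam, pure3, eF, altF, smul_eq_mul]
    rw [Finset.sum_eq_single r.1.1]
    · simp
    · intro b _ hb
      simp [Ne.symm hb]
    · simp
  have e2 : (∑ j', gy j' • fam n (Sum.inr (Sum.inl j'))) r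
      = nalt r.1.1 * (shiftF gy r.1.2 * nalt r.2) := by
    rw [Finset.sum_apply]
    simp only [Pi.smul_apply, fam, pure3, eF', altF, smul_eq_mul]
    rw [← sum_shift gy r.1.2, Finset.sum_mul, Finset.mul_sum]
    apply Finset.sum_congr rfl
    intro j' _
    ring
  have e3 : (∑ k', gz k' • fam n (Sum.inr (Sum.inr (Sum.inl k')))) r
      = nalt r.1.1 * (nalt r.1.2 * shiftF gz r.2) := by
    rw [Finset.sum_apply]
    simp only [Pi.smul_apply, fam, pure3, eF', altF, smul_eq_mul]
    rw [← sum_shift gz r.2, Finset.mul_sum, Finset.mul_sum]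
    apply Finset.sum_congr rfl
    intro k' _
    ring
  have e4 : (gd • fam n (Sum.inr (Sum.inr (Sum.inr ())))) r = gd := by
    simp [fam, pure3, oneF]
  simp only [Pi.add_apply, e1, e2, e3, e4]
  ring

lemma fam_indep (hn : 2 ≤ n) : LinearIndependent ℝ (fam n) := by
  rw [Fintype.linearIndependent_iff]
  intro g hg
  set gx : Fin n → ℝ := fun i => g (Sum.inl i) with hgx
  set gy : Fin (n - 1) → ℝ := fun j => g (Sum.inr (Sum.inl j)) with hgy
  set gz : Fin (n - 1) → ℝ := fun k => g (Sum.inr (Sum.inr (Sum.inl k))) with hgz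
  set gd : ℝ := g (Sum.inr (Sum.inr (Sum.inr ()))) with hgd
  have key : ∀ r : (Fin n × Fin n) × Fin n, gx r.1.1 * (nalt r.1.2 * nalt r.2)
      + nalt r.1.1 * (shiftF gy r.1.2 * nalt r.2)
      + nalt r.1.1 * (nalt r.1.2 * shiftF gz r.2) + gd = 0 := by
    intro r
    rw [← comb_eval gx gy gz gd r]
    have := congrFun hg r
    simp only [Pi.zero_apply] at this
    rw [← this]
    rw [Fintype.sum_sum_type, Fintype.sum_sum_type, Fintype.sum_sum_type]
    simp only [Finset.sum_apply, Pi.add_apply, Fintype.sum_unique]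
    rfl
  have hn1 : 0 < n - 1 := by omega
  have hn0 : 0 < n := by omega
  set z0 : Fin n := ⟨0, hn0⟩ with hz0
  set o1 : Fin n := ⟨1, by omega⟩ with ho1
  have nz0 : nalt (z0 : ℕ) = 1 := nalt_zero
  have no1 : nalt (o1 : ℕ) = -1 := nalt_one
  have sz0 : ∀ g' : Fin (n-1) → ℝ, shiftF g' z0 = 0 := by
    intro g'; simp [shiftF, hz0]
  have sfj : ∀ (g' : Fin (n-1) → ℝ) (j' : Fin (n-1)),
      shiftF g' ⟨(j' : ℕ) + 1, by have := j'.2; omega⟩ = g' j' := by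
    intro g' j'
    simp [shiftF]
  -- step 1 : gx i = -gd
  have h1 : ∀ i : Fin n, gx i = -gd := by
    intro i
    have := key ((i, z0), z0)
    simp only [nz0, sz0] at this
    linarith
  -- step 2 : gy j' = 0 and gd = 0
  have h2 : ∀ j' : Fin (n - 1), gy j' = 0 := by
    intro j'
    set jf : Fin n := ⟨(j' : ℕ) + 1, by have := j'.2; omega⟩ with hjf
    have hA := key ((z0, jf), z0)
    have hB := key ((o1, jf), z0)
    simp only [nz0, no1, sz0, hjf, sfj] at hA hB
    rw [h1 z0] at hA
    rw [h1 o1] at hB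
    linarith
  have h3 : gd = 0 := by
    set j0 : Fin (n - 1) := ⟨0, hn1⟩ with hj0
    have hA := key ((z0, ⟨(j0 : ℕ) + 1, by have := j0.2; omega⟩), z0)
    rw [sfj gy j0] at hA
    have hv : nalt ((j0 : ℕ) + 1) = -1 := by
      have : ((j0 : ℕ) + 1) = 1 := rfl
      rw [this, nalt_one]
    simp only [nz0, sz0, hv] at hA
    rw [h1 z0, h2 j0] at hA
    linarith
  have h4 : ∀ k' : Fin (n - 1), gz k' = 0 := by
    intro k'
    set kf : Fin n := ⟨(k' : ℕ) + 1, by have := k'.2; omega⟩ with hkf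
    have := key ((z0, z0), kf)
    simp only [nz0, sz0, hkf, sfj] at this
    rw [h1 z0, h3] at this
    linarith
  intro i
  match i with
  | Sum.inl i => rw [show g (Sum.inl i) = gx i from rfl, h1 i, h3]; ring
  | Sum.inr (Sum.inl j') => exact h2 j'
  | Sum.inr (Sum.inr (Sum.inl k')) => exact h4 k'
  | Sum.inr (Sum.inr (Sum.inr ())) => exact h3

/-- generic double induction for vanishing mixed second difference -/
lemma rect {n : ℕ} (g : ℕ → ℕ → ℝ)
    (hrec : ∀ j k, j + 2 ≤ n → k + 2 ≤ n →
      g (j+1) (k+1) = g (j+1) k + g j (k+1) - g j k) :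
    ∀ k j, k < n → j < n → g j k = g j 0 + g 0 k - g 0 0 := by
  intro k
  induction k with
  | zero => intro j _ _; ring
  | succ k ihk =>
    intro j hk hj
    induction j with
    | zero => ring
    | succ j ihj =>
      have h1 : g (j+1) (k+1) = g (j+1) k + g j (k+1) - g j k :=
        hrec j k (by omega) (by omega)
      have h2 := ihk (j+1) (by omega) (by omega)
      have h3 := ihk j (by omega) (by omega)
      have h4 := ihj (by omega)
      rw [h1, h2, h3, h4]; ring

def uu (q : ℕ → ℕ → ℕ → ℝ) (i b c : ℕ) : ℝ :=
  q i (b+1) (c+1) - q i (b+1) c - q i b (c+1) + q i b c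
def vv (q : ℕ → ℕ → ℕ → ℝ) (a j c : ℕ) : ℝ :=
  q (a+1) j (c+1) - q (a+1) j c - q a j (c+1) + q a j c
def ww (q : ℕ → ℕ → ℕ → ℝ) (a b k : ℕ) : ℝ :=
  q (a+1) (b+1) k - q (a+1) b k - q a (b+1) k + q a b k
def tt (q : ℕ → ℕ → ℕ → ℝ) (a b c : ℕ) : ℝ := uu q (a+1) b c - uu q a b c

lemma main_split (n : ℕ) (hn : 2 ≤ n) (q : ℕ → ℕ → ℕ → ℝ)
    (hX : ∀ a b c, a + 2 ≤ n → b + 2 ≤ n → c + 2 ≤ n →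
      (q (a+1) (b+1) (c+1) - q (a+1) (b+1) c - q (a+1) b (c+1) + q (a+1) b c)
      + (q a (b+1) (c+1) - q a (b+1) c - q a b (c+1) + q a b c) = 0)
    (hY : ∀ a b c, a + 2 ≤ n → b + 2 ≤ n → c + 2 ≤ n →
      (q (a+1) (b+1) (c+1) - q (a+1) (b+1) c - q a (b+1) (c+1) + q a (b+1) c)
      + (q (a+1) b (c+1) - q (a+1) b c - q a b (c+1) + q a b c) = 0)
    (hZ : ∀ a b c, a + 2 ≤ n → b + 2 ≤ n → c + 2 ≤ n →
      (q (a+1) (b+1) (c+1) - q (a+1) b (c+1) - q a (b+1) (c+1) + q a b (c+1))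
      + (q (a+1) (b+1) c - q (a+1) b c - q a (b+1) c + q a b c) = 0) :
    ∃ F G W : ℕ → ℝ, ∃ δ : ℝ, G 0 = 0 ∧ W 0 = 0 ∧
      ∀ i j k, i < n → j < n → k < n →
        q i j k = F i + G j + W k + δ * nalt (i + j + k) := by
  classical
  set u := uu q with hu
  set v := vv q with hv
  set w := ww q with hw
  set t := tt q with ht
  have hXu : ∀ a b c, a + 2 ≤ n → b + 2 ≤ n → c + 2 ≤ n → u (a+1) b c = - u a b c := by
    intro a b c ha hb hc; have := hX a b c ha hb hc; simp only [hu, uu]; linarith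
  have hYv : ∀ a b c, a + 2 ≤ n → b + 2 ≤ n → c + 2 ≤ n → v a (b+1) c = - v a b c := by
    intro a b c ha hb hc; have := hY a b c ha hb hc; simp only [hv, vv]; linarith
  have hZw : ∀ a b c, a + 2 ≤ n → b + 2 ≤ n → c + 2 ≤ n → w a b (c+1) = - w a b c := by
    intro a b c ha hb hc; have := hZ a b c ha hb hc; simp only [hw, ww]; linarith
  -- t in terms of u, v, w
  have htu : ∀ a b c, t a b c = u (a+1) b c - u a b c := fun _ _ _ => rfl
  have htv : ∀ a b c, t a b c = v a (b+1) c - v a b c := by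
    intro a b c; simp only [ht, hu, hv, tt, uu, vv]; ring
  have htw : ∀ a b c, t a b c = w a b (c+1) - w a b c := by
    intro a b c; simp only [ht, hu, hw, tt, uu, ww]; ring
  have htu2 : ∀ a b c, a + 2 ≤ n → b + 2 ≤ n → c + 2 ≤ n → t a b c = -2 * u a b c := by
    intro a b c ha hb hc; rw [htu, hXu a b c ha hb hc]; ring
  have htv2 : ∀ a b c, a + 2 ≤ n → b + 2 ≤ n → c + 2 ≤ n → t a b c = -2 * v a b c := by
    intro a b c ha hb hc; rw [htv, hYv a b c ha hb hc]; ring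
  have htw2 : ∀ a b c, a + 2 ≤ n → b + 2 ≤ n → c + 2 ≤ n → t a b c = -2 * w a b c := by
    intro a b c ha hb hc; rw [htw, hZw a b c ha hb hc]; ring
  -- alternation of u,v,w in their special coordinate, full range
  have hu_alt : ∀ b c, b + 2 ≤ n → c + 2 ≤ n → ∀ i, i < n → u i b c = nalt i * u 0 b c := by
    intro b c hb hc i
    induction i with
    | zero => intro _; rw [nalt_zero]; ring
    | succ i ih =>
      intro hi
      rw [hXu i b c (by omega) hb hc, ih (by omega), nalt_succ]; ring
  have hv_alt : ∀ a c, a + 2 ≤ n → c + 2 ≤ n → ∀ j, j < n → v a j c = nalt j * v a 0 c := by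
    intro a c ha hc j
    induction j with
    | zero => intro _; rw [nalt_zero]; ring
    | succ j ih =>
      intro hj
      rw [hYv a j c ha (by omega) hc, ih (by omega), nalt_succ]; ring
  have hw_alt : ∀ a b, a + 2 ≤ n → b + 2 ≤ n → ∀ k, k < n → w a b k = nalt k * w a b 0 := by
    intro a b ha hb k
    induction k with
    | zero => intro _; rw [nalt_zero]; ring
    | succ k ih =>
      intro hk
      rw [hZw a b k ha hb (by omega), ih (by omega), nalt_succ]; ring
  -- t alternates in each coordinate
  have ht_a : ∀ a b c, a + 3 ≤ n → b + 2 ≤ n → c + 2 ≤ n → t (a+1) b c = - t a b c := by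
    intro a b c ha hb hc
    rw [htu2 (a+1) b c (by omega) hb hc, htu2 a b c (by omega) hb hc,
      hXu a b c (by omega) hb hc]; ring
  have ht_b : ∀ a b c, a + 2 ≤ n → b + 3 ≤ n → c + 2 ≤ n → t a (b+1) c = - t a b c := by
    intro a b c ha hb hc
    rw [htv2 a (b+1) c ha (by omega) hc, htv2 a b c ha (by omega) hc,
      hYv a b c ha (by omega) hc]; ring
  have ht_c : ∀ a b c, a + 2 ≤ n → b + 2 ≤ n → c + 3 ≤ n → t a b (c+1) = - t a b c := by
    intro a b c ha hb hc
    rw [htw2 a b (c+1) ha hb (by omega), htw2 a b c ha hb (by omega),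
      hZw a b c ha hb (by omega)]; ring
  set τ : ℝ := t 0 0 0 with hτ
  have ht_val : ∀ a b c, a + 2 ≤ n → b + 2 ≤ n → c + 2 ≤ n →
      t a b c = nalt (a + b + c) * τ := by
    have step1 : ∀ a, a + 2 ≤ n → t a 0 0 = nalt a * τ := by
      intro a
      induction a with
      | zero => intro _; rw [nalt_zero]; ring
      | succ a ih =>
        intro ha
        rw [ht_a a 0 0 (by omega) (by omega) (by omega), ih (by omega), nalt_succ]; ring
    have step2 : ∀ a b, a + 2 ≤ n → b + 2 ≤ n → t a b 0 = nalt (a + b) * τ := by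
      intro a b ha
      induction b with
      | zero => intro _; rw [step1 a ha]; norm_num
      | succ b ih =>
        intro hb
        rw [ht_b a b 0 ha (by omega) (by omega), ih (by omega)]
        rw [show a + (b+1) = (a+b)+1 by ring, nalt_succ]; ring
    intro a b c ha hb
    induction c with
    | zero => intro _; rw [step2 a b ha hb]; norm_num
    | succ c ih =>
      intro hc
      rw [ht_c a b c ha hb (by omega), ih (by omega)]
      rw [show a + b + (c+1) = (a+b+c)+1 by ring, nalt_succ]; ring
  -- the three mixed second differences are the same alternating constant
  set c1 : ℝ := -τ / 2 with hc1
  have hu_val : ∀ i b c, i < n → b + 2 ≤ n → c + 2 ≤ n → u i b c = c1 * nalt (i + b + c) := by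
    intro i b c hi hb hc
    rw [hu_alt b c hb hc i hi]
    have h0 : u 0 b c = -t 0 b c / 2 := by
      have := htu2 0 b c (by omega) hb hc; linarith
    rw [h0, ht_val 0 b c (by omega) hb hc]
    simp only [show (0:ℕ) + b + c = b + c from by ring, show i + b + c = i + (b+c) from by ring,
      nalt_add]
    ring
  have hv_val : ∀ a j c, j < n → a + 2 ≤ n → c + 2 ≤ n → v a j c = c1 * nalt (a + j + c) := by
    intro a j c hj ha hc
    rw [hv_alt a c ha hc j hj]
    have h0 : v a 0 c = -t a 0 c / 2 := by
      have := htv2 a 0 c ha (by omega) hc; linarith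
    rw [h0, ht_val a 0 c ha (by omega) hc]
    simp only [show a + 0 + c = a + c from by ring, show a + j + c = j + (a+c) from by ring,
      nalt_add]
    ring
  have hw_val : ∀ a b k, k < n → a + 2 ≤ n → b + 2 ≤ n → w a b k = c1 * nalt (a + b + k) := by
    intro a b k hk ha hb
    rw [hw_alt a b ha hb k hk]
    have h0 : w a b 0 = -t a b 0 / 2 := by
      have := htw2 a b 0 ha hb (by omega); linarith
    rw [h0, ht_val a b 0 ha hb (by omega)]
    simp only [show a + b + 0 = a + b from by ring, show a + b + k = k + (a+b) from by ring,
      nalt_add]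
    ring
  -- subtract the alternating part
  set δ : ℝ := c1 / 4 with hδ
  set q' : ℕ → ℕ → ℕ → ℝ := fun i j k => q i j k - δ * nalt (i + j + k) with hq'
  have hq'_u : ∀ i b c, i < n → b + 2 ≤ n → c + 2 ≤ n →
      q' i (b+1) (c+1) = q' i (b+1) c + q' i b (c+1) - q' i b c := by
    intro i b c hi hb hc
    have h := hu_val i b c hi hb hc
    simp only [hq', hu, uu] at h ⊢
    have e1 : nalt (i + (b+1) + (c+1)) = nalt (i + b + c) := by
      rw [show i + (b+1) + (c+1) = (i+b+c) + 1 + 1 by ring, nalt_succ, nalt_succ]; ring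
    have e2 : nalt (i + (b+1) + c) = -nalt (i + b + c) := by
      rw [show i + (b+1) + c = (i+b+c) + 1 by ring, nalt_succ]
    have e3 : nalt (i + b + (c+1)) = -nalt (i + b + c) := by
      rw [show i + b + (c+1) = (i+b+c) + 1 by ring, nalt_succ]
    have hc : c1 = 4 * δ := by rw [hδ]; ring
    rw [hc] at h
    rw [e1, e2, e3]
    linarith
  have hq'_v : ∀ a j c, j < n → a + 2 ≤ n → c + 2 ≤ n →
      q' (a+1) j (c+1) = q' (a+1) j c + q' a j (c+1) - q' a j c := by
    intro a j c hj ha hc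
    have h := hv_val a j c hj ha hc
    simp only [hq', hv, vv] at h ⊢
    have e1 : nalt ((a+1) + j + (c+1)) = nalt (a + j + c) := by
      rw [show (a+1) + j + (c+1) = (a+j+c) + 1 + 1 by ring, nalt_succ, nalt_succ]; ring
    have e2 : nalt ((a+1) + j + c) = -nalt (a + j + c) := by
      rw [show (a+1) + j + c = (a+j+c) + 1 by ring, nalt_succ]
    have e3 : nalt (a + j + (c+1)) = -nalt (a + j + c) := by
      rw [show a + j + (c+1) = (a+j+c) + 1 by ring, nalt_succ]
    have hc : c1 = 4 * δ := by rw [hδ]; ring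
    rw [hc] at h
    rw [e1, e2, e3]
    linarith
  have hq'_w : ∀ a b k, k < n → a + 2 ≤ n → b + 2 ≤ n →
      q' (a+1) (b+1) k = q' (a+1) b k + q' a (b+1) k - q' a b k := by
    intro a b k hk ha hb
    have h := hw_val a b k hk ha hb
    simp only [hq', hw, ww] at h ⊢
    have e1 : nalt ((a+1) + (b+1) + k) = nalt (a + b + k) := by
      rw [show (a+1) + (b+1) + k = (a+b+k) + 1 + 1 by ring, nalt_succ, nalt_succ]; ring
    have e2 : nalt ((a+1) + b + k) = -nalt (a + b + k) := by
      rw [show (a+1) + b + k = (a+b+k) + 1 by ring, nalt_succ]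
    have e3 : nalt (a + (b+1) + k) = -nalt (a + b + k) := by
      rw [show a + (b+1) + k = (a+b+k) + 1 by ring, nalt_succ]
    have hc : c1 = 4 * δ := by rw [hδ]; ring
    rw [hc] at h
    rw [e1, e2, e3]
    linarith
  -- separate variables
  have sep1 : ∀ i, i < n → ∀ j k, j < n → k < n →
      q' i j k = q' i j 0 + q' i 0 k - q' i 0 0 := by
    intro i hi j k hj hk
    exact rect (fun j k => q' i j k)
      (fun j k hj2 hk2 => by
        have := hq'_u i j k hi hj2 hk2; linarith) k j hk hj
  have sep2 : ∀ i k, i < n → k < n → q' i 0 k = q' i 0 0 + q' 0 0 k - q' 0 0 0 := by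
    intro i k hi hk
    exact rect (fun i k => q' i 0 k)
      (fun a c ha2 hc2 => by
        have := hq'_v a 0 c (by omega) ha2 hc2; linarith) k i hk hi
  have sep3 : ∀ i j, i < n → j < n → q' i j 0 = q' i 0 0 + q' 0 j 0 - q' 0 0 0 := by
    intro i j hi hj
    exact rect (fun i j => q' i j 0)
      (fun a b ha2 hb2 => by
        have := hq'_w a b 0 (by omega) ha2 hb2; linarith) j i hj hi
  refine ⟨fun i => q' i 0 0, fun j => q' 0 j 0 - q' 0 0 0, fun k => q' 0 0 k - q' 0 0 0, δ,
    by ring, by ring, ?_⟩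
  intro i j k hi hj hk
  dsimp only
  have h1 := sep1 i hi j k hj hk
  have h2 := sep2 i k hi hk
  have h3 := sep3 i j hi hj
  have : q' i j k = q i j k - δ * nalt (i + j + k) := rfl
  linarith


lemma kron3_mulVec_pure (M1 M2 M3 : Matrix (Fin (n-1)) (Fin n) ℝ) (u v w : Fin n → ℝ)
    (s : (Fin (n-1) × Fin (n-1)) × Fin (n-1)) :
    (M1 ⊗ₖ M2 ⊗ₖ M3).mulVec (pure3 u v w) s
      = M1.mulVec u s.1.1 * M2.mulVec v s.1.2 * M3.mulVec w s.2 := by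
  rw [kron_mulVec_pure (M1 ⊗ₖ M2) M3 (pure3 u v w) (fun a : Fin n × Fin n => u a.1 * v a.2) w
      (fun a b => rfl) s]
  rw [kron_mulVec_pure M1 M2 _ u v (fun a b => rfl) s.1]

lemma hH_row (s : Fin (n-1)) : (Hmat n).mulVec altF s = 0 := congrFun Hmat_mulVec_nalt s
lemma hG_row (s : Fin (n-1)) : (Gmat n).mulVec oneF s = 0 := congrFun Gmat_mulVec_one s

lemma fam_memX (i : ι n) : (Gmat n ⊗ₖ Hmat n ⊗ₖ Hmat n).mulVec (fam n i) = 0 := by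
  funext s
  simp only [Pi.zero_apply]
  rcases i with i | j' | k' | u
  · rw [show fam n (Sum.inl i) = pure3 (eF i) altF altF from rfl, kron3_mulVec_pure,
      hH_row s.1.2]; ring
  · rw [show fam n (Sum.inr (Sum.inl j')) = pure3 altF (eF' j') altF from rfl,
      kron3_mulVec_pure, hH_row s.2]; ring
  · rw [show fam n (Sum.inr (Sum.inr (Sum.inl k'))) = pure3 altF altF (eF' k') from rfl,
      kron3_mulVec_pure, hH_row s.1.2]; ring
  · rw [show fam n (Sum.inr (Sum.inr (Sum.inr ⟨⟩))) = pure3 oneF oneF oneF from rfl,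
      kron3_mulVec_pure, hG_row s.1.1]; ring

lemma fam_memY (i : ι n) : (Hmat n ⊗ₖ Gmat n ⊗ₖ Hmat n).mulVec (fam n i) = 0 := by
  funext s
  simp only [Pi.zero_apply]
  rcases i with i | j' | k' | u
  · rw [show fam n (Sum.inl i) = pure3 (eF i) altF altF from rfl, kron3_mulVec_pure,
      hH_row s.2]; ring
  · rw [show fam n (Sum.inr (Sum.inl j')) = pure3 altF (eF' j') altF from rfl,
      kron3_mulVec_pure, hH_row s.1.1]; ring
  · rw [show fam n (Sum.inr (Sum.inr (Sum.inl k'))) = pure3 altF altF (eF' k') from rfl,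
      kron3_mulVec_pure, hH_row s.1.1]; ring
  · rw [show fam n (Sum.inr (Sum.inr (Sum.inr ⟨⟩))) = pure3 oneF oneF oneF from rfl,
      kron3_mulVec_pure, hG_row s.1.2]; ring

lemma fam_memZ (i : ι n) : (Hmat n ⊗ₖ Hmat n ⊗ₖ Gmat n).mulVec (fam n i) = 0 := by
  funext s
  simp only [Pi.zero_apply]
  rcases i with i | j' | k' | u
  · rw [show fam n (Sum.inl i) = pure3 (eF i) altF altF from rfl, kron3_mulVec_pure,
      hH_row s.1.2]; ring
  · rw [show fam n (Sum.inr (Sum.inl j')) = pure3 altF (eF' j') altF from rfl,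
      kron3_mulVec_pure, hH_row s.1.1]; ring
  · rw [show fam n (Sum.inr (Sum.inr (Sum.inl k'))) = pure3 altF altF (eF' k') from rfl,
      kron3_mulVec_pure, hH_row s.1.1]; ring
  · rw [show fam n (Sum.inr (Sum.inr (Sum.inr ⟨⟩))) = pure3 oneF oneF oneF from rfl,
      kron3_mulVec_pure, hG_row s.2]; ring

lemma expandX (p : ((Fin n × Fin n) × Fin n) → ℝ) (s : (Fin (n-1) × Fin (n-1)) × Fin (n-1)) :
    (Gmat n ⊗ₖ Hmat n ⊗ₖ Hmat n).mulVec p s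
    = (p ((hi s.1.1, hi s.1.2), hi s.2) + p ((hi s.1.1, hi s.1.2), lo s.2)
      + p ((hi s.1.1, lo s.1.2), hi s.2) + p ((hi s.1.1, lo s.1.2), lo s.2))
    - (p ((lo s.1.1, hi s.1.2), hi s.2) + p ((lo s.1.1, hi s.1.2), lo s.2)
      + p ((lo s.1.1, lo s.1.2), hi s.2) + p ((lo s.1.1, lo s.1.2), lo s.2)) := by
  rw [kron_mulVec, kron_mulVec]
  simp only [Gmat_mulVec, Hmat_mulVec]
  ring

lemma expandY (p : ((Fin n × Fin n) × Fin n) → ℝ) (s : (Fin (n-1) × Fin (n-1)) × Fin (n-1)) :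
    (Hmat n ⊗ₖ Gmat n ⊗ₖ Hmat n).mulVec p s
    = (p ((hi s.1.1, hi s.1.2), hi s.2) + p ((hi s.1.1, hi s.1.2), lo s.2)
      + p ((lo s.1.1, hi s.1.2), hi s.2) + p ((lo s.1.1, hi s.1.2), lo s.2))
    - (p ((hi s.1.1, lo s.1.2), hi s.2) + p ((hi s.1.1, lo s.1.2), lo s.2)
      + p ((lo s.1.1, lo s.1.2), hi s.2) + p ((lo s.1.1, lo s.1.2), lo s.2)) := by
  rw [kron_mulVec, kron_mulVec]
  simp only [Gmat_mulVec, Hmat_mulVec]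
  ring

lemma expandZ (p : ((Fin n × Fin n) × Fin n) → ℝ) (s : (Fin (n-1) × Fin (n-1)) × Fin (n-1)) :
    (Hmat n ⊗ₖ Hmat n ⊗ₖ Gmat n).mulVec p s
    = (p ((hi s.1.1, hi s.1.2), hi s.2) + p ((hi s.1.1, lo s.1.2), hi s.2)
      + p ((lo s.1.1, hi s.1.2), hi s.2) + p ((lo s.1.1, lo s.1.2), hi s.2))
    - (p ((hi s.1.1, hi s.1.2), lo s.2) + p ((hi s.1.1, lo s.1.2), lo s.2)
      + p ((lo s.1.1, hi s.1.2), lo s.2) + p ((lo s.1.1, lo s.1.2), lo s.2)) := by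
  rw [kron_mulVec, kron_mulVec]
  simp only [Gmat_mulVec, Hmat_mulVec]
  ring

def qdef (p : ((Fin n × Fin n) × Fin n) → ℝ) : ℕ → ℕ → ℕ → ℝ := fun i j k =>
  if h : i < n ∧ j < n ∧ k < n then
    nalt (i+j+k) * p ((⟨i, h.1⟩, ⟨j, h.2.1⟩), ⟨k, h.2.2⟩) else 0

lemma qdef_eq (p : ((Fin n × Fin n) × Fin n) → ℝ) {i j k : ℕ}
    (hi : i < n) (hj : j < n) (hk : k < n) :
    qdef p i j k = nalt (i+j+k) * p ((⟨i, hi⟩, ⟨j, hj⟩), ⟨k, hk⟩) := by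
  rw [qdef, dif_pos (show i < n ∧ j < n ∧ k < n from ⟨hi, hj, hk⟩)]

lemma ker_sub_span (hn : 2 ≤ n) (p : ((Fin n × Fin n) × Fin n) → ℝ)
    (hX : (Gmat n ⊗ₖ Hmat n ⊗ₖ Hmat n).mulVec p = 0)
    (hY : (Hmat n ⊗ₖ Gmat n ⊗ₖ Hmat n).mulVec p = 0)
    (hZ : (Hmat n ⊗ₖ Hmat n ⊗ₖ Gmat n).mulVec p = 0) :
    p ∈ Submodule.span ℝ (Set.range (fam n)) := by
  have hX' : ∀ a b c : ℕ, a + 2 ≤ n → b + 2 ≤ n → c + 2 ≤ n →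
      (qdef p (a+1) (b+1) (c+1) - qdef p (a+1) (b+1) c - qdef p (a+1) b (c+1) + qdef p (a+1) b c)
      + (qdef p a (b+1) (c+1) - qdef p a (b+1) c - qdef p a b (c+1) + qdef p a b c) = 0 := by
    intro a b c ha hb hc
    have h0 := congrFun hX ((⟨a, by omega⟩, ⟨b, by omega⟩), ⟨c, by omega⟩)
    rw [expandX] at h0
    simp only [Pi.zero_apply, hi, lo] at h0
    rw [qdef_eq p (show a+1 < n by omega) (show b+1 < n by omega) (show c+1 < n by omega),
        qdef_eq p (show a+1 < n by omega) (show b+1 < n by omega) (show c < n by omega),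
        qdef_eq p (show a+1 < n by omega) (show b < n by omega) (show c+1 < n by omega),
        qdef_eq p (show a+1 < n by omega) (show b < n by omega) (show c < n by omega),
        qdef_eq p (show a < n by omega) (show b+1 < n by omega) (show c+1 < n by omega),
        qdef_eq p (show a < n by omega) (show b+1 < n by omega) (show c < n by omega),
        qdef_eq p (show a < n by omega) (show b < n by omega) (show c+1 < n by omega),
        qdef_eq p (show a < n by omega) (show b < n by omega) (show c < n by omega)]
    have e3 : nalt (a+1+(b+1)+(c+1)) = -nalt (a+b+c) := by
      rw [show a+1+(b+1)+(c+1) = (a+b+c)+1+1+1 by ring, nalt_succ, nalt_succ, nalt_succ]; ring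
    have e2a : nalt (a+1+(b+1)+c) = nalt (a+b+c) := by
      rw [show a+1+(b+1)+c = (a+b+c)+1+1 by ring, nalt_succ, nalt_succ]; ring
    have e2b : nalt (a+1+b+(c+1)) = nalt (a+b+c) := by
      rw [show a+1+b+(c+1) = (a+b+c)+1+1 by ring, nalt_succ, nalt_succ]; ring
    have e2c : nalt (a+(b+1)+(c+1)) = nalt (a+b+c) := by
      rw [show a+(b+1)+(c+1) = (a+b+c)+1+1 by ring, nalt_succ, nalt_succ]; ring
    have e1a : nalt (a+1+b+c) = -nalt (a+b+c) := by
      rw [show a+1+b+c = (a+b+c)+1 by ring, nalt_succ]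
    have e1b : nalt (a+(b+1)+c) = -nalt (a+b+c) := by
      rw [show a+(b+1)+c = (a+b+c)+1 by ring, nalt_succ]
    have e1c : nalt (a+b+(c+1)) = -nalt (a+b+c) := by
      rw [show a+b+(c+1) = (a+b+c)+1 by ring, nalt_succ]
    rw [e3, e2a, e2b, e2c, e1a, e1b, e1c]
    linear_combination (-(nalt (a+b+c))) * h0
  have hY' : ∀ a b c : ℕ, a + 2 ≤ n → b + 2 ≤ n → c + 2 ≤ n →
      (qdef p (a+1) (b+1) (c+1) - qdef p (a+1) (b+1) c - qdef p a (b+1) (c+1) + qdef p a (b+1) c)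
      + (qdef p (a+1) b (c+1) - qdef p (a+1) b c - qdef p a b (c+1) + qdef p a b c) = 0 := by
    intro a b c ha hb hc
    have h0 := congrFun hY ((⟨a, by omega⟩, ⟨b, by omega⟩), ⟨c, by omega⟩)
    rw [expandY] at h0
    simp only [Pi.zero_apply, hi, lo] at h0
    rw [qdef_eq p (show a+1 < n by omega) (show b+1 < n by omega) (show c+1 < n by omega),
        qdef_eq p (show a+1 < n by omega) (show b+1 < n by omega) (show c < n by omega),
        qdef_eq p (show a < n by omega) (show b+1 < n by omega) (show c+1 < n by omega),
        qdef_eq p (show a < n by omega) (show b+1 < n by omega) (show c < n by omega),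
        qdef_eq p (show a+1 < n by omega) (show b < n by omega) (show c+1 < n by omega),
        qdef_eq p (show a+1 < n by omega) (show b < n by omega) (show c < n by omega),
        qdef_eq p (show a < n by omega) (show b < n by omega) (show c+1 < n by omega),
        qdef_eq p (show a < n by omega) (show b < n by omega) (show c < n by omega)]
    have e3 : nalt (a+1+(b+1)+(c+1)) = -nalt (a+b+c) := by
      rw [show a+1+(b+1)+(c+1) = (a+b+c)+1+1+1 by ring, nalt_succ, nalt_succ, nalt_succ]; ring
    have e2a : nalt (a+1+(b+1)+c) = nalt (a+b+c) := by
      rw [show a+1+(b+1)+c = (a+b+c)+1+1 by ring, nalt_succ, nalt_succ]; ring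
    have e2b : nalt (a+1+b+(c+1)) = nalt (a+b+c) := by
      rw [show a+1+b+(c+1) = (a+b+c)+1+1 by ring, nalt_succ, nalt_succ]; ring
    have e2c : nalt (a+(b+1)+(c+1)) = nalt (a+b+c) := by
      rw [show a+(b+1)+(c+1) = (a+b+c)+1+1 by ring, nalt_succ, nalt_succ]; ring
    have e1a : nalt (a+1+b+c) = -nalt (a+b+c) := by
      rw [show a+1+b+c = (a+b+c)+1 by ring, nalt_succ]
    have e1b : nalt (a+(b+1)+c) = -nalt (a+b+c) := by
      rw [show a+(b+1)+c = (a+b+c)+1 by ring, nalt_succ]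
    have e1c : nalt (a+b+(c+1)) = -nalt (a+b+c) := by
      rw [show a+b+(c+1) = (a+b+c)+1 by ring, nalt_succ]
    rw [e3, e2a, e2b, e2c, e1a, e1b, e1c]
    linear_combination (-(nalt (a+b+c))) * h0
  have hZ' : ∀ a b c : ℕ, a + 2 ≤ n → b + 2 ≤ n → c + 2 ≤ n →
      (qdef p (a+1) (b+1) (c+1) - qdef p (a+1) b (c+1) - qdef p a (b+1) (c+1) + qdef p a b (c+1))
      + (qdef p (a+1) (b+1) c - qdef p (a+1) b c - qdef p a (b+1) c + qdef p a b c) = 0 := by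
    intro a b c ha hb hc
    have h0 := congrFun hZ ((⟨a, by omega⟩, ⟨b, by omega⟩), ⟨c, by omega⟩)
    rw [expandZ] at h0
    simp only [Pi.zero_apply, hi, lo] at h0
    rw [qdef_eq p (show a+1 < n by omega) (show b+1 < n by omega) (show c+1 < n by omega),
        qdef_eq p (show a+1 < n by omega) (show b < n by omega) (show c+1 < n by omega),
        qdef_eq p (show a < n by omega) (show b+1 < n by omega) (show c+1 < n by omega),
        qdef_eq p (show a < n by omega) (show b < n by omega) (show c+1 < n by omega),
        qdef_eq p (show a+1 < n by omega) (show b+1 < n by omega) (show c < n by omega),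
        qdef_eq p (show a+1 < n by omega) (show b < n by omega) (show c < n by omega),
        qdef_eq p (show a < n by omega) (show b+1 < n by omega) (show c < n by omega),
        qdef_eq p (show a < n by omega) (show b < n by omega) (show c < n by omega)]
    have e3 : nalt (a+1+(b+1)+(c+1)) = -nalt (a+b+c) := by
      rw [show a+1+(b+1)+(c+1) = (a+b+c)+1+1+1 by ring, nalt_succ, nalt_succ, nalt_succ]; ring
    have e2a : nalt (a+1+(b+1)+c) = nalt (a+b+c) := by
      rw [show a+1+(b+1)+c = (a+b+c)+1+1 by ring, nalt_succ, nalt_succ]; ring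
    have e2b : nalt (a+1+b+(c+1)) = nalt (a+b+c) := by
      rw [show a+1+b+(c+1) = (a+b+c)+1+1 by ring, nalt_succ, nalt_succ]; ring
    have e2c : nalt (a+(b+1)+(c+1)) = nalt (a+b+c) := by
      rw [show a+(b+1)+(c+1) = (a+b+c)+1+1 by ring, nalt_succ, nalt_succ]; ring
    have e1a : nalt (a+1+b+c) = -nalt (a+b+c) := by
      rw [show a+1+b+c = (a+b+c)+1 by ring, nalt_succ]
    have e1b : nalt (a+(b+1)+c) = -nalt (a+b+c) := by
      rw [show a+(b+1)+c = (a+b+c)+1 by ring, nalt_succ]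
    have e1c : nalt (a+b+(c+1)) = -nalt (a+b+c) := by
      rw [show a+b+(c+1) = (a+b+c)+1 by ring, nalt_succ]
    rw [e3, e2a, e2b, e2c, e1a, e1b, e1c]
    linear_combination (-(nalt (a+b+c))) * h0
  obtain ⟨F, G, W, δ, hG0, hW0, hform⟩ := main_split n hn (qdef p) hX' hY' hZ'
  set gx : Fin n → ℝ := fun i => nalt (i : ℕ) * F (i : ℕ) with hgx
  set gy : Fin (n - 1) → ℝ := fun j' => nalt ((j' : ℕ) + 1) * G ((j' : ℕ) + 1) with hgy
  set gz : Fin (n - 1) → ℝ := fun k' => nalt ((k' : ℕ) + 1) * W ((k' : ℕ) + 1) with hgz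
  have hshy : ∀ j : Fin n, shiftF gy j = nalt (j : ℕ) * G (j : ℕ) := by
    intro j
    by_cases h : (j : ℕ) = 0
    · rw [shiftF, dif_pos h, h, hG0]; ring
    · rw [shiftF, dif_neg h, hgy]
      simp only
      rw [show ((j : ℕ) - 1) + 1 = (j : ℕ) from by omega]
  have hshz : ∀ k : Fin n, shiftF gz k = nalt (k : ℕ) * W (k : ℕ) := by
    intro k
    by_cases h : (k : ℕ) = 0
    · rw [shiftF, dif_pos h, h, hW0]; ring
    · rw [shiftF, dif_neg h, hgz]
      simp only
      rw [show ((k : ℕ) - 1) + 1 = (k : ℕ) from by omega]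
  have hp : p = (∑ i, gx i • fam n (Sum.inl i)
      + (∑ j', gy j' • fam n (Sum.inr (Sum.inl j'))
      + (∑ k', gz k' • fam n (Sum.inr (Sum.inr (Sum.inl k')))
      + δ • fam n (Sum.inr (Sum.inr (Sum.inr ())))))) := by
    funext r
    rw [comb_eval gx gy gz δ r]
    have hq := hform (r.1.1 : ℕ) (r.1.2 : ℕ) (r.2 : ℕ) r.1.1.isLt r.1.2.isLt r.2.isLt
    have hpq : p r = nalt ((r.1.1 : ℕ) + (r.1.2 : ℕ) + (r.2 : ℕ)) *
        qdef p (r.1.1 : ℕ) (r.1.2 : ℕ) (r.2 : ℕ) := by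
      rw [qdef_eq p r.1.1.isLt r.1.2.isLt r.2.isLt]
      rw [← mul_assoc, nalt_sq, one_mul]
    rw [hpq, hq, hshy, hshz, hgx]
    simp only
    have ha := nalt_sq (r.1.1 : ℕ)
    have hb := nalt_sq (r.1.2 : ℕ)
    have hc := nalt_sq (r.2 : ℕ)
    rw [nalt_add, nalt_add]
    ring_nf
    linear_combination (δ * (nalt (r.1.2 : ℕ) * nalt (r.1.2 : ℕ)) * (nalt (r.2 : ℕ) * nalt (r.2 : ℕ))) * ha
      + (δ * (nalt (r.2 : ℕ) * nalt (r.2 : ℕ))) * hb + δ * hc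
  rw [hp]
  refine Submodule.add_mem _ ?_ (Submodule.add_mem _ ?_ (Submodule.add_mem _ ?_ ?_))
  · exact Submodule.sum_mem _ fun i _ => Submodule.smul_mem _ _
      (Submodule.subset_span (Set.mem_range_self _))
  · exact Submodule.sum_mem _ fun i _ => Submodule.smul_mem _ _
      (Submodule.subset_span (Set.mem_range_self _))
  · exact Submodule.sum_mem _ fun i _ => Submodule.smul_mem _ _
      (Submodule.subset_span (Set.mem_range_self _))
  · exact Submodule.smul_mem _ _ (Submodule.subset_span (Set.mem_range_self _))

def RG (n : ℕ) : Matrix (Fin n) (Fin (n-1)) ℝ :=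
  Matrix.of fun j i => if (i : ℕ) < (j : ℕ) then 1 else 0
def RH (n : ℕ) : Matrix (Fin n) (Fin (n-1)) ℝ :=
  Matrix.of fun j i => if (i : ℕ) < (j : ℕ) then nalt ((j : ℕ) - 1 - (i : ℕ)) else 0

lemma mul_col_eq_mulVec (M : Matrix (Fin (n-1)) (Fin n) ℝ) (N : Matrix (Fin n) (Fin (n-1)) ℝ)
    (a : Fin (n-1)) (i : Fin (n-1)) :
    (M * N) a i = M.mulVec (fun j => N j i) a := by
  simp only [Matrix.mul_apply, Matrix.mulVec, dotProduct]

lemma G_RG : Gmat n * RG n = 1 := by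
  ext a i
  rw [mul_col_eq_mulVec, Gmat_mulVec]
  simp only [RG, Matrix.of_apply, hi, lo, Matrix.one_apply, Fin.ext_iff]
  have ha := a.2
  have hi2 := i.2
  split_ifs <;> first | (exfalso; omega) | norm_num

lemma H_RH : Hmat n * RH n = 1 := by
  ext a i
  rw [mul_col_eq_mulVec, Hmat_mulVec]
  simp only [RH, Matrix.of_apply, hi, lo, Matrix.one_apply, Fin.ext_iff]
  have ha := a.2
  have hi2 := i.2
  by_cases h1 : (i : ℕ) < (a : ℕ)
  · rw [if_pos (by omega), if_pos h1, if_neg (by omega)]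
    have : (a : ℕ) + 1 - 1 - (i : ℕ) = ((a : ℕ) - 1 - (i : ℕ)) + 1 := by omega
    rw [this, nalt_succ]
    ring
  · by_cases h2 : (i : ℕ) = (a : ℕ)
    · rw [if_pos (by omega), if_neg (by omega), if_pos (by omega)]
      have : (a : ℕ) + 1 - 1 - (i : ℕ) = 0 := by omega
      rw [this, nalt_zero]
      ring
    · rw [if_neg (by omega), if_neg (by omega), if_neg (by omega)]
      ring

lemma dotProduct_self_nonneg' {α : Type*} [Fintype α] (v : α → ℝ) : 0 ≤ dotProduct v v :=
  Finset.sum_nonneg fun i _ => mul_self_nonneg (v i)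

end Stmt18

open Stmt18 in
/-- in 3D, the common kernel of `B_x`, `B_y`, `B_z` has dimension
`3n − 1`; consequently the Schur complement `Bᵀ A⁻¹ B` (with `A = I₃ ⊗ Δ`) has exactly
`3n − 1` zero eigenvalues. -/
theorem stmt18 (n : ℕ) (hn : 2 ≤ n) (h : ℝ) (hh : h = 1 / n)
    (Bx By Bz :
      Matrix ((Fin (n - 1) × Fin (n - 1)) × Fin (n - 1)) ((Fin n × Fin n) × Fin n) ℝ)
    (hBx : Bx = (1 / (4 * h)) • (Gmat n ⊗ₖ Hmat n ⊗ₖ Hmat n))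
    (hBy : By = (1 / (4 * h)) • (Hmat n ⊗ₖ Gmat n ⊗ₖ Hmat n))
    (hBz : Bz = (1 / (4 * h)) • (Hmat n ⊗ₖ Hmat n ⊗ₖ Gmat n))
    (B : Matrix ((Fin 3) × ((Fin (n - 1) × Fin (n - 1)) × Fin (n - 1)))
          ((Fin n × Fin n) × Fin n) ℝ)
    (hB : B = Matrix.of fun p q =>
      if p.1 = 0 then Bx p.2 q else if p.1 = 1 then By p.2 q else Bz p.2 q)
    (Δ : Matrix ((Fin (n - 1) × Fin (n - 1)) × Fin (n - 1))
          ((Fin (n - 1) × Fin (n - 1)) × Fin (n - 1)) ℝ)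
    (hΔ : Δ = Bx * Bxᵀ + By * Byᵀ + Bz * Bzᵀ)
    (A : Matrix ((Fin 3) × ((Fin (n - 1) × Fin (n - 1)) × Fin (n - 1)))
          ((Fin 3) × ((Fin (n - 1) × Fin (n - 1)) × Fin (n - 1))) ℝ)
    (hA : A = (1 : Matrix (Fin 3) (Fin 3) ℝ) ⊗ₖ Δ) :
    Module.finrank ℝ
        ↥(LinearMap.ker Bx.mulVecLin ⊓ LinearMap.ker By.mulVecLin ⊓
          LinearMap.ker Bz.mulVecLin) = 3 * n - 1 ∧
    Module.finrank ℝ (LinearMap.ker (Bᵀ * A⁻¹ * B).mulVecLin) = 3 * n - 1 := by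
  classical
  open Stmt18 in
  have hn0 : 0 < n := by omega
  have hnr : (0:ℝ) < (n:ℝ) := by exact_mod_cast hn0
  have hhpos : (0:ℝ) < h := by rw [hh]; exact div_pos one_pos hnr
  have hc0 : (1 / (4 * h) : ℝ) ≠ 0 := by positivity
  -- kernels of scaled matrices
  have kers : ∀ (M : Matrix ((Fin (n-1) × Fin (n-1)) × Fin (n-1)) ((Fin n × Fin n) × Fin n) ℝ),
      LinearMap.ker ((1 / (4 * h) : ℝ) • M).mulVecLin = LinearMap.ker M.mulVecLin := by
    intro M
    have hsm : ((1 / (4 * h) : ℝ) • M).mulVecLin = (1 / (4 * h) : ℝ) • M.mulVecLin := by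
      apply LinearMap.ext
      intro v
      simp [Matrix.mulVecLin_apply, Matrix.smul_mulVec]
    rw [hsm, LinearMap.ker_smul _ _ hc0]
  -- the intersection kernel equals the span of the family
  have hK : LinearMap.ker Bx.mulVecLin ⊓ LinearMap.ker By.mulVecLin ⊓
      LinearMap.ker Bz.mulVecLin = Submodule.span ℝ (Set.range (fam n)) := by
    apply le_antisymm
    · rintro p hp
      have h1 : p ∈ LinearMap.ker Bx.mulVecLin := hp.1.1
      have h2 : p ∈ LinearMap.ker By.mulVecLin := hp.1.2
      have h3 : p ∈ LinearMap.ker Bz.mulVecLin := hp.2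
      rw [hBx, kers, LinearMap.mem_ker, Matrix.mulVecLin_apply] at h1
      rw [hBy, kers, LinearMap.mem_ker, Matrix.mulVecLin_apply] at h2
      rw [hBz, kers, LinearMap.mem_ker, Matrix.mulVecLin_apply] at h3
      exact ker_sub_span hn p h1 h2 h3
    · rw [Submodule.span_le]
      rintro _ ⟨i, rfl⟩
      refine Submodule.mem_inf.mpr ⟨Submodule.mem_inf.mpr ⟨?_, ?_⟩, ?_⟩
      · rw [LinearMap.mem_ker, hBx, Matrix.mulVecLin_apply, Matrix.smul_mulVec,
          fam_memX, smul_zero]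
      · rw [LinearMap.mem_ker, hBy, Matrix.mulVecLin_apply, Matrix.smul_mulVec,
          fam_memY, smul_zero]
      · rw [LinearMap.mem_ker, hBz, Matrix.mulVecLin_apply, Matrix.smul_mulVec,
          fam_memZ, smul_zero]
  have hrank1 : Module.finrank ℝ
      ↥(LinearMap.ker Bx.mulVecLin ⊓ LinearMap.ker By.mulVecLin ⊓
        LinearMap.ker Bz.mulVecLin) = 3 * n - 1 := by
    rw [hK, finrank_span_eq_card (fam_indep hn), card_ι hn]
  refine ⟨hrank1, ?_⟩
  -- second part : Schur complement
  -- Bxᵀ is injective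
  have hBxT : ∀ x : ((Fin (n-1) × Fin (n-1)) × Fin (n-1)) → ℝ, Bxᵀ *ᵥ x = 0 → x = 0 := by
    intro x hx
    have hMx : (Gmat n ⊗ₖ Hmat n ⊗ₖ Hmat n)ᵀ *ᵥ x = 0 := by
      rw [hBx, Matrix.transpose_smul, Matrix.smul_mulVec] at hx
      exact (smul_eq_zero.mp hx).resolve_left hc0
    have hinv : (Gmat n ⊗ₖ Hmat n ⊗ₖ Hmat n) * (RG n ⊗ₖ RH n ⊗ₖ RH n) = 1 := by
      rw [← Matrix.mul_kronecker_mul, ← Matrix.mul_kronecker_mul, G_RG, H_RH,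
        Matrix.one_kronecker_one, Matrix.one_kronecker_one]
    calc x = ((Gmat n ⊗ₖ Hmat n ⊗ₖ Hmat n) * (RG n ⊗ₖ RH n ⊗ₖ RH n))ᵀ *ᵥ x := by
            rw [hinv, Matrix.transpose_one, Matrix.one_mulVec]
      _ = (RG n ⊗ₖ RH n ⊗ₖ RH n)ᵀ *ᵥ ((Gmat n ⊗ₖ Hmat n ⊗ₖ Hmat n)ᵀ *ᵥ x) := by
            rw [Matrix.mulVec_mulVec, Matrix.transpose_mul]
      _ = 0 := by rw [hMx, Matrix.mulVec_zero]
  -- dot product identities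
  have hdot : ∀ (M : Matrix ((Fin (n-1) × Fin (n-1)) × Fin (n-1)) ((Fin n × Fin n) × Fin n) ℝ)
      (x : ((Fin (n-1) × Fin (n-1)) × Fin (n-1)) → ℝ),
      dotProduct x ((M * Mᵀ) *ᵥ x) = dotProduct (Mᵀ *ᵥ x) (Mᵀ *ᵥ x) := by
    intro M x
    rw [← Matrix.mulVec_mulVec, dotProduct_mulVec, ← Matrix.transpose_transpose M,
      Matrix.vecMul_transpose, Matrix.transpose_transpose]
  -- Δ is positive definite
  have hΔsym : Δᵀ = Δ := by
    rw [hΔ]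
    simp [Matrix.transpose_add, Matrix.transpose_mul, Matrix.transpose_transpose, mul_assoc]
  have hΔpd : Δ.PosDef := by
    refine Matrix.posDef_iff_dotProduct_mulVec.mpr ⟨?_, ?_⟩
    · rw [Matrix.IsHermitian, Matrix.conjTranspose_eq_transpose_of_trivial, hΔsym]
    · intro x hx
      have hexp : dotProduct (star x) (Δ *ᵥ x)
          = dotProduct (Bxᵀ *ᵥ x) (Bxᵀ *ᵥ x)
          + dotProduct (Byᵀ *ᵥ x) (Byᵀ *ᵥ x)
          + dotProduct (Bzᵀ *ᵥ x) (Bzᵀ *ᵥ x) := by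
        rw [show star x = x from star_trivial x, hΔ, Matrix.add_mulVec, Matrix.add_mulVec,
          dotProduct_add, dotProduct_add, hdot, hdot, hdot]
      rw [hexp]
      have h1 : 0 < dotProduct (Bxᵀ *ᵥ x) (Bxᵀ *ᵥ x) := by
        rcases (dotProduct_self_nonneg' (Bxᵀ *ᵥ x)).lt_or_eq with hlt | heq
        · exact hlt
        · exfalso
          exact hx (hBxT x (dotProduct_self_eq_zero.mp heq.symm))
      have h2 := dotProduct_self_nonneg' (Byᵀ *ᵥ x)
      have h3 := dotProduct_self_nonneg' (Bzᵀ *ᵥ x)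
      linarith
  -- A is positive definite
  have hApd : A.PosDef := by
    refine Matrix.posDef_iff_dotProduct_mulVec.mpr ⟨?_, ?_⟩
    · rw [Matrix.IsHermitian, Matrix.conjTranspose_eq_transpose_of_trivial, hA]
      ext ⟨t, r⟩ ⟨t', r'⟩
      simp only [Matrix.transpose_apply, Matrix.kroneckerMap_apply]
      rw [show (1 : Matrix (Fin 3) (Fin 3) ℝ) t' t = (1 : Matrix (Fin 3) (Fin 3) ℝ) t t' from
        by simp [Matrix.one_apply, eq_comm]]
      rw [show Δ r' r = Δ r r' from by rw [show Δ r' r = Δᵀ r r' from rfl, hΔsym]]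
    · intro x hx
      rw [show star x = x from star_trivial x, hA]
      have hslice : ∀ tr : (Fin 3) × ((Fin (n-1) × Fin (n-1)) × Fin (n-1)),
          (((1 : Matrix (Fin 3) (Fin 3) ℝ) ⊗ₖ Δ) *ᵥ x) tr
          = (Δ *ᵥ fun l => x (tr.1, l)) tr.2 := by
        intro tr
        rw [kron_mulVec]
        exact congrFun (Matrix.one_mulVec _) tr.1
      have hsum : dotProduct x (((1 : Matrix (Fin 3) (Fin 3) ℝ) ⊗ₖ Δ) *ᵥ x)
          = ∑ t : Fin 3, dotProduct (fun l => x (t, l)) (Δ *ᵥ fun l => x (t, l)) := by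
        rw [dotProduct, Fintype.sum_prod_type]
        apply Finset.sum_congr rfl
        intro t _
        apply Finset.sum_congr rfl
        intro r _
        rw [hslice (t, r)]
      rw [hsum]
      have hnonneg : ∀ t : Fin 3,
          0 ≤ dotProduct (fun l => x (t, l)) (Δ *ᵥ fun l => x (t, l)) := by
        intro t
        have := hΔpd.posSemidef.dotProduct_mulVec_nonneg (fun l => x (t, l))
        simpa using this
      obtain ⟨⟨t0, r0⟩, ht0⟩ : ∃ tr, x tr ≠ 0 := by
        by_contra hcon
        push_neg at hcon
        exact hx (funext hcon)
      have hpos : 0 < dotProduct (fun l => x (t0, l)) (Δ *ᵥ fun l => x (t0, l)) := by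
        have hxne : (fun l => x (t0, l)) ≠ 0 := by
          intro hcon
          exact ht0 (congrFun hcon r0)
        have := hΔpd.dotProduct_mulVec_pos hxne
        simpa using this
      exact Finset.sum_pos' (fun t _ => hnonneg t) ⟨t0, Finset.mem_univ t0, hpos⟩
  have hAinv : A⁻¹.PosDef := hApd.inv
  -- kernel of B equals the intersection
  have hBv : ∀ (v : ((Fin n × Fin n) × Fin n) → ℝ) (t : Fin 3)
      (s : (Fin (n-1) × Fin (n-1)) × Fin (n-1)),
      (B *ᵥ v) (t, s) = if t = 0 then (Bx *ᵥ v) s else if t = 1 then (By *ᵥ v) s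
        else (Bz *ᵥ v) s := by
    intro v t s
    by_cases h0 : t = 0
    · simp [hB, h0, Matrix.mulVec, dotProduct]
    · by_cases h1 : t = 1
      · simp [hB, h0, h1, Matrix.mulVec, dotProduct]
      · simp [hB, h0, h1, Matrix.mulVec, dotProduct]
  have hkerB : LinearMap.ker B.mulVecLin
      = LinearMap.ker Bx.mulVecLin ⊓ LinearMap.ker By.mulVecLin ⊓
        LinearMap.ker Bz.mulVecLin := by
    ext p
    simp only [LinearMap.mem_ker, Matrix.mulVecLin_apply, Submodule.mem_inf]
    constructor
    · intro hp
      refine ⟨⟨?_, ?_⟩, ?_⟩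
      · funext s
        have := congrFun hp (0, s)
        rw [hBv] at this
        simpa using this
      · funext s
        have := congrFun hp (1, s)
        rw [hBv] at this
        simpa using this
      · funext s
        have := congrFun hp (2, s)
        rw [hBv] at this
        have h20 : (2 : Fin 3) ≠ 0 := by decide
        have h21 : (2 : Fin 3) ≠ 1 := by decide
        rw [if_neg h20, if_neg h21] at this
        simpa using this
    · rintro ⟨⟨h1, h2⟩, h3⟩
      funext ts
      obtain ⟨t, s⟩ := ts
      rw [hBv]
      by_cases ht0 : t = 0
      · rw [if_pos ht0, h1]; rfl
      · by_cases ht1 : t = 1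
        · rw [if_neg ht0, if_pos ht1, h2]; rfl
        · rw [if_neg ht0, if_neg ht1, h3]; rfl
  -- kernel of the Schur complement equals kernel of B
  have hkerS : LinearMap.ker (Bᵀ * A⁻¹ * B).mulVecLin = LinearMap.ker B.mulVecLin := by
    ext p
    simp only [LinearMap.mem_ker, Matrix.mulVecLin_apply]
    constructor
    · intro hp
      by_contra hne
      have hyne : B *ᵥ p ≠ 0 := hne
      have hpos := hAinv.dotProduct_mulVec_pos hyne
      rw [show star (B *ᵥ p) = B *ᵥ p from star_trivial _] at hpos
      have hzero : dotProduct (B *ᵥ p) (A⁻¹ *ᵥ (B *ᵥ p)) = 0 := by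
        have : dotProduct p ((Bᵀ * A⁻¹ * B) *ᵥ p) = 0 := by
          rw [hp, dotProduct_zero]
        rw [← Matrix.mulVec_mulVec, ← Matrix.mulVec_mulVec, dotProduct_mulVec,
          Matrix.vecMul_transpose] at this
        exact this
      rw [hzero] at hpos
      exact lt_irrefl 0 hpos
    · intro hp
      rw [← Matrix.mulVec_mulVec, ← Matrix.mulVec_mulVec, hp, Matrix.mulVec_zero,
        Matrix.mulVec_zero]
  rw [hkerS, hkerB]
  exact hrank1
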